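/- Let $(C_n)_{n\in\omega}$ be a sequence of pairwise disjoint finite nonempty subsets of $\omega$, let $\mathcal{G} = \{g \in \omega^\omega : \forall n,\ g(n) \in C_n\}$, and let $p$ be a free ultrafilter on $\omega$. Then the set $Z_p = \{p\text{-}\lim g : g \in \mathcal{G}\}$ is a discrete subspace of $\beta\omega$. -/

import Mathlib

open Filter Topology

/-- Key property of a `p`-limit of `pure ∘ g`. -/
lemma key {g : ℕ → ℕ} {p : Ultrafilter ℕ} {x : Ultrafilter ℕ}
    (h : Tendsto (fun n => (pure (g n) : Ultrafilter ℕ)) ↑p (𝓝 x))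
    {s : Set ℕ} (hs : s ∈ x) : {n | g n ∈ s} ∈ p := by
  have hopen : IsOpen {u : Ultrafilter ℕ | s ∈ u} := ultrafilter_isOpen_basic s
  have hmem : {u : Ultrafilter ℕ | s ∈ u} ∈ 𝓝 x := hopen.mem_nhds hs
  have := h hmem
  simpa using this

/-- If `(C n)` is a sequence of pairwise disjoint finite nonempty subsets of `ω`,
`𝒢 = {g : ∀ n, g n ∈ C n}` and `p` is a free ultrafilter on `ω`, then
`Z_p = {p-lim g : g ∈ 𝒢}` is a discrete subspace of `βω` (the space of ultrafilters on `ℕ`). -/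
theorem stmt0 (C : ℕ → Set ℕ) (hfin : ∀ n, (C n).Finite)
    (hne : ∀ n, (C n).Nonempty)
    (hdisj : ∀ m n, m ≠ n → Disjoint (C m) (C n))
    (p : Ultrafilter ℕ) (hp : ∀ a, p ≠ pure a) :
    DiscreteTopology {x : Ultrafilter ℕ // ∃ g : ℕ → ℕ, (∀ n, g n ∈ C n) ∧
      Tendsto (fun n => (pure (g n) : Ultrafilter ℕ)) ↑p (𝓝 x)} := by
  rw [discreteTopology_iff_isOpen_singleton]
  rintro ⟨x, g, hg, hgx⟩
  -- `x` belongs to the basic open set determined by `range g`.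
  have hxr : Set.range g ∈ x := by
    by_contra hnot
    have : (Set.range g)ᶜ ∈ x := Ultrafilter.compl_mem_iff_notMem.mpr hnot
    have h2 : {n | g n ∈ (Set.range g)ᶜ} ∈ p := key hgx this
    have h3 : {n | g n ∈ (Set.range g)ᶜ} = (∅ : Set ℕ) := by
      ext n; simp [Set.mem_range]
    rw [h3] at h2
    exact Ultrafilter.empty_notMem h2
  have hset : ({⟨x, g, hg, hgx⟩} : Set {x : Ultrafilter ℕ // ∃ g : ℕ → ℕ, (∀ n, g n ∈ C n) ∧
      Tendsto (fun n => (pure (g n) : Ultrafilter ℕ)) ↑p (𝓝 x)})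
      = Subtype.val ⁻¹' {u : Ultrafilter ℕ | Set.range g ∈ u} := by
    ext ⟨y, g', hg', hgy⟩
    simp only [Set.mem_singleton_iff, Set.mem_preimage, Set.mem_setOf_eq, Subtype.mk.injEq]
    constructor
    · rintro rfl; exact hxr
    · intro hy
      -- on a `p`-large set, `g' = g`
      have hA : {n | g' n = g n} ∈ p := by
        have h1 : {n | g' n ∈ Set.range g} ∈ p := key hgy hy
        filter_upwards [h1] with n hn
        obtain ⟨m, hm⟩ := hn
        rcases eq_or_ne m n with rfl | hmn
        · exact hm.symm
        · exact absurd (Set.mem_inter (hm ▸ hg m) (hg' n))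
            (by simp [Set.disjoint_iff_inter_eq_empty.mp (hdisj m n hmn)])
      -- hence the two limits coincide
      have htend : Tendsto (fun n => (pure (g n) : Ultrafilter ℕ)) ↑p (𝓝 y) := by
        refine hgy.congr' ?_
        filter_upwards [hA] with n hn
        rw [hn]
      exact tendsto_nhds_unique htend hgx
  rw [hset]
  exact (ultrafilter_isOpen_basic _).preimage continuous_subtype_val
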